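/- arXiv:0712.1331 — 2 statements merged into one kernel-verified Lean document; each statement's English description precedes it below -/
import Mathlib

section
/- For all s > 1 and all real t: |t|^s ≤ |t|^{s-1} t · φ(t)/φ(1) + 1, where φ is the odd function defined for t ≥ 0 by φ(t) = ∫_0^t (1+σ)^{-(m+1)} dσ, with m > 0. -/
open Real intervalIntegral

/-- For all `s > 1`, `m > 0`, and all real `t`:
`|t|^s ≤ |t|^{s-1} t · φ(t)/φ(1) + 1`, where `φ` is the odd function with
`φ(t) = ∫_0^t (1+σ)^{-(m+1)} dσ` for `t ≥ 0`. -/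
theorem stmt1 (s m : ℝ) (hs : 1 < s) (hm : 0 < m) (φ : ℝ → ℝ)
    (hφ : ∀ t : ℝ, 0 ≤ t → φ t = ∫ σ in (0:ℝ)..t, (1 + σ) ^ (-(m + 1)))
    (hodd : ∀ t : ℝ, φ (-t) = -φ t) :
    ∀ t : ℝ, |t| ^ s ≤ |t| ^ (s - 1) * t * φ t / φ 1 + 1 := by
  set f : ℝ → ℝ := fun σ => (1 + σ) ^ (-(m + 1)) with hf
  have hcont : ∀ a b : ℝ, 0 ≤ a → ContinuousOn f (Set.Icc a b) := by
    intro a b ha x hx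
    have hx' : (0:ℝ) < 1 + x := by have := hx.1; linarith
    exact ((Real.continuousAt_rpow_const (1 + x) _ (Or.inl hx'.ne')).comp
      ((continuous_const.add continuous_id).continuousAt)).continuousWithinAt
  have hint : ∀ a b : ℝ, 0 ≤ a → a ≤ b →
      IntervalIntegrable f MeasureTheory.volume a b := by
    intro a b ha hab
    apply ContinuousOn.intervalIntegrable
    rw [Set.uIcc_of_le hab]
    exact hcont a b ha
  -- monotonicity on [0, ∞)
  have hmono : ∀ a b : ℝ, 0 ≤ a → a ≤ b → φ a ≤ φ b := by
    intro a b ha hab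
    have hb : (0:ℝ) ≤ b := le_trans ha hab
    rw [hφ a ha, hφ b hb]
    rw [← intervalIntegral.integral_add_adjacent_intervals (hint 0 a le_rfl ha)
      (hint a b ha hab)]
    have h2 : (0:ℝ) ≤ ∫ σ in a..b, f σ := by
      apply intervalIntegral.integral_nonneg hab
      intro u hu
      exact Real.rpow_nonneg (by have := hu.1; linarith) _
    linarith
  have hφ0 : φ 0 = 0 := by rw [hφ 0 le_rfl, intervalIntegral.integral_same]
  have hφnonneg : ∀ t : ℝ, 0 ≤ t → 0 ≤ φ t := fun t ht => hφ0 ▸ hmono 0 t le_rfl ht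
  have hφ1 : 0 < φ 1 := by
    rw [hφ 1 zero_le_one]
    apply intervalIntegral.intervalIntegral_pos_of_pos_on (hint 0 1 le_rfl zero_le_one)
    · intro x hx
      exact Real.rpow_pos_of_pos (by have := hx.1; linarith) _
    · exact zero_lt_one
  -- t * φ t = |t| * φ |t|
  have key : ∀ t : ℝ, t * φ t = |t| * φ |t| := by
    intro t
    rcases le_or_gt 0 t with h | h
    · rw [abs_of_nonneg h]
    · rw [abs_of_neg h]
      have := hodd (-t)
      rw [neg_neg] at this
      nlinarith [this]
  intro t
  have habs : 0 ≤ |t| := abs_nonneg t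
  rcases le_or_gt (|t|) 1 with h | h
  · have h1 : |t| ^ s ≤ 1 := Real.rpow_le_one habs h (by linarith)
    have h2 : 0 ≤ |t| ^ (s - 1) * t * φ t / φ 1 := by
      rw [mul_assoc, key t]
      exact div_nonneg (mul_nonneg (Real.rpow_nonneg habs _)
        (mul_nonneg habs (hφnonneg _ habs))) hφ1.le
    linarith
  · have ht0 : (0:ℝ) < |t| := by linarith
    have h2 : |t| ^ s ≤ |t| ^ (s - 1) * t * φ t / φ 1 := by
      rw [mul_assoc, key t]
      have hφt : φ 1 ≤ φ |t| := hmono 1 (|t|) zero_le_one h.le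
      have hpow : |t| ^ (s - 1) * |t| = |t| ^ s := by
        rw [← Real.rpow_add_one ht0.ne']; norm_num
      rw [le_div_iff₀ hφ1]
      calc |t| ^ s * φ 1 ≤ |t| ^ s * φ |t| :=
            mul_le_mul_of_nonneg_left hφt (Real.rpow_nonneg habs s)
        _ = |t| ^ (s - 1) * (|t| * φ |t|) := by rw [← hpow]; ring
    nlinarith
end

section
/- Let u, v be continuous on an open set Ω ⊂ ℝ^N and suppose u − v is a viscosity subsolution of −M⁺(D²(u−v)) + G ≤ f in Ω, where G(x) = F(u(x)) − F(v(x)) with F increasing and continuous, and f continuous. Then (u−v)⁺ = max{u−v, 0} is a viscosity subsolution of −M⁺(D²(u−v)⁺) + G⁺ ≤ f⁺ in Ω. -/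
open Filter Topology

/-- Second derivative test: at an interior local minimum of a C² function,
the second directional derivative along any direction is nonnegative. -/
lemma secondDeriv_nonneg_of_isLocalMin {E : Type*} [NormedAddCommGroup E] [NormedSpace ℝ E]
    {φ : E → ℝ} (hφ : ContDiff ℝ 2 φ) {x : E} (hmin : IsLocalMin φ x) (e : E) :
    0 ≤ fderiv ℝ (fun y => fderiv ℝ φ y e) x e := by
  by_contra hc
  push_neg at hc
  set ψ : E → ℝ := fun y => fderiv ℝ φ y e with hψ
  set L : ℝ → E := fun t => x + t • e with hL
  have hLc : ∀ t : ℝ, HasDerivAt L e t := by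
    intro t
    simpa [hL] using ((hasDerivAt_id t).smul_const e).const_add x
  have hL0 : L 0 = x := by simp [hL]
  set g : ℝ → ℝ := fun t => φ (L t) with hg
  set h : ℝ → ℝ := fun t => ψ (L t) with hh
  have hφd : Differentiable ℝ φ := hφ.differentiable (by norm_num)
  have hgd : ∀ t : ℝ, HasDerivAt g (h t) t := by
    intro t
    exact (hφd (L t)).hasFDerivAt.comp_hasDerivAt t (hLc t)
  -- ψ is differentiable at x
  have hψd : DifferentiableAt ℝ ψ x := by
    have h1 : DifferentiableAt ℝ (fun y => fderiv ℝ φ y) x := by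
      have := (hφ.fderiv_right (m := 1) (by norm_num)).differentiable (by norm_num)
      exact this x
    exact h1.clm_apply (differentiableAt_const e)
  have hhd : HasDerivAt h (fderiv ℝ ψ x e) 0 := by
    have h2 : HasFDerivAt ψ (fderiv ℝ ψ x) (L 0) := hL0 ▸ hψd.hasFDerivAt
    exact h2.comp_hasDerivAt 0 (hLc 0)
  -- g has a local min at 0
  have hgmin : IsLocalMin g 0 := by
    have hLt : Tendsto L (𝓝 0) (𝓝 x) := by
      rw [← hL0]; exact (hLc 0).continuousAt
    have := hLt.eventually hmin
    simpa [IsLocalMin, IsMinFilter, hg, hL0] using this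
  -- first order condition
  have hh0 : h 0 = 0 := hgmin.hasDerivAt_eq_zero (hgd 0)
  -- slope of h tends to the (negative) second derivative
  have hslope : Tendsto (slope h 0) (𝓝[≠] 0) (𝓝 (fderiv ℝ ψ x e)) :=
    hasDerivAt_iff_tendsto_slope.mp hhd
  have hev1 : ∀ᶠ t in 𝓝[≠] (0:ℝ), slope h 0 t < 0 := hslope.eventually_lt_const hc
  have hev1' : ∀ᶠ t in 𝓝 (0:ℝ), t ≠ 0 → slope h 0 t < 0 := eventually_nhdsWithin_iff.mp hev1
  have hev2 : ∀ᶠ t in 𝓝 (0:ℝ), g 0 ≤ g t := hgmin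
  obtain ⟨ε, hε, hball⟩ := Metric.eventually_nhds_iff.mp (hev1'.and hev2)
  set δ : ℝ := ε / 2 with hδ
  have hδ0 : 0 < δ := by positivity
  have hδε : ∀ t ∈ Set.Icc (0:ℝ) δ, dist t (0:ℝ) < ε := by
    intro t ht
    rw [Real.dist_eq, sub_zero, abs_of_nonneg ht.1]
    have := ht.2
    simp only [hδ] at this ⊢
    linarith
  -- mean value theorem on [0, δ]
  obtain ⟨ξ, hξ, hξeq⟩ := exists_hasDerivAt_eq_slope g h hδ0
    (fun t _ => (hgd t).continuousAt.continuousWithinAt)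
    (fun t _ => hgd t)
  have hξmem : dist ξ (0:ℝ) < ε := hδε ξ ⟨hξ.1.le, hξ.2.le⟩
  have hξneg : h ξ < 0 := by
    have hs := (hball hξmem).1 (ne_of_gt hξ.1)
    rw [slope_def_field, hh0] at hs
    have : h ξ / ξ < 0 := by simpa [div_eq_inv_mul] using hs
    rcases div_neg_iff.mp this with ⟨h1, h2⟩ | ⟨h1, h2⟩
    · linarith [hξ.1]
    · exact h1
  have hgδ : g 0 ≤ g δ := (hball (hδε δ ⟨hδ0.le, le_rfl⟩)).2
  rw [hξeq] at hξneg
  have : 0 ≤ (g δ - g 0) / (δ - 0) := by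
    apply div_nonneg <;> linarith
  linarith



/-- Pucci maximal operator of a matrix via the sup representation
`M⁺(M) = sup { tr(A M) : A symmetric, λI ≤ A ≤ ΛI }`. -/
noncomputable def pucciSup {N : ℕ} (lam Lam : ℝ) (M : Matrix (Fin N) (Fin N) ℝ) : ℝ :=
  sSup { t | ∃ A : Matrix (Fin N) (Fin N) ℝ, A.IsHermitian ∧
    (A - lam • 1).PosSemidef ∧ (Lam • 1 - A).PosSemidef ∧ t = (A * M).trace }

/-- The Hessian matrix of `φ : ℝ^N → ℝ` at `x`. -/
noncomputable def hessMat {N : ℕ} (φ : EuclideanSpace ℝ (Fin N) → ℝ)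
    (x : EuclideanSpace ℝ (Fin N)) : Matrix (Fin N) (Fin N) ℝ :=
  Matrix.of fun i j =>
    fderiv ℝ (fun y => fderiv ℝ φ y (EuclideanSpace.single j 1)) x (EuclideanSpace.single i 1)

/-- `w` is a viscosity subsolution of `−M⁺_{λ,Λ}(D²w) + g ≤ h` in `Ω`: for every C²
test function `φ` and every `x ∈ Ω` at which `w − φ` has a local maximum on `Ω`,
`−M⁺(D²φ(x)) + g(x) ≤ h(x)`. -/
def IsViscSubsol {N : ℕ} (lam Lam : ℝ) (Ω : Set (EuclideanSpace ℝ (Fin N)))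
    (w g h : EuclideanSpace ℝ (Fin N) → ℝ) : Prop :=
  ∀ φ : EuclideanSpace ℝ (Fin N) → ℝ, ContDiff ℝ 2 φ →
    ∀ x ∈ Ω, IsLocalMaxOn (fun y => w y - φ y) Ω x →
      -pucciSup lam Lam (hessMat φ x) + g x ≤ h x


/-- Kato-type lemma: if `u − v` is a viscosity subsolution of
`−M⁺(D²(u−v)) + G ≤ f` with `G = F(u) − F(v)`, `F` increasing and continuous,
then `(u−v)⁺` is a viscosity subsolution of `−M⁺(D²(u−v)⁺) + G⁺ ≤ f⁺`. -/
theorem stmt14 {N : ℕ} (lam Lam : ℝ) (hlam : 0 < lam) (hlL : lam ≤ Lam)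
    (Ω : Set (EuclideanSpace ℝ (Fin N))) (hΩ : IsOpen Ω)
    (u v f : EuclideanSpace ℝ (Fin N) → ℝ)
    (hu : ContinuousOn u Ω) (hv : ContinuousOn v Ω) (hf : ContinuousOn f Ω)
    (F : ℝ → ℝ) (hFmono : StrictMono F) (hFcont : Continuous F)
    (G : EuclideanSpace ℝ (Fin N) → ℝ) (hG : ∀ x, G x = F (u x) - F (v x))
    (hsub : IsViscSubsol lam Lam Ω (fun x => u x - v x) G f) :
    IsViscSubsol lam Lam Ω (fun x => max (u x - v x) 0)
      (fun x => max (G x) 0) (fun x => max (f x) 0) := by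
  intro φ hφ x hx hmax
  by_cases hxw : 0 ≤ u x - v x
  · -- case u x ≥ v x: w − φ also has a local max at x, and G⁺ x = G x
    have hmax' : IsLocalMaxOn (fun y => (u y - v y) - φ y) Ω x := by
      have hmax2 : ∀ᶠ y in 𝓝[Ω] x,
          max (u y - v y) 0 - φ y ≤ max (u x - v x) 0 - φ x := hmax
      filter_upwards [hmax2] with y hy
      have h1 : u y - v y ≤ max (u y - v y) 0 := le_max_left _ _
      have h2 : max (u x - v x) 0 = u x - v x := max_eq_left hxw
      show (u y - v y) - φ y ≤ (u x - v x) - φ x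
      have := hy
      simp only [h2] at this
      linarith
    have h1 := hsub φ hφ x hx hmax'
    have hGx : max (G x) 0 = G x := by
      apply max_eq_left
      rw [hG x, sub_nonneg]
      exact (hFmono.le_iff_le).mpr (by linarith)
    show -pucciSup lam Lam (hessMat φ x) + max (G x) 0 ≤ max (f x) 0
    rw [hGx]
    calc -pucciSup lam Lam (hessMat φ x) + G x ≤ f x := h1
      _ ≤ max (f x) 0 := le_max_left _ _
  · -- case u x < v x: φ has a local min at x, so M⁺(D²φ x) ≥ 0 and G⁺ x = 0
    push_neg at hxw
    have hGx : max (G x) 0 = 0 := by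
      apply max_eq_right
      rw [hG x, sub_nonpos]
      exact ((hFmono.lt_iff_lt).mpr (by linarith)).le
    have hnhd : 𝓝[Ω] x = 𝓝 x := nhdsWithin_eq_nhds.mpr (hΩ.mem_nhds hx)
    have hmin : IsLocalMin φ x := by
      have hmax2 : ∀ᶠ y in 𝓝[Ω] x,
          max (u y - v y) 0 - φ y ≤ max (u x - v x) 0 - φ x := hmax
      rw [hnhd] at hmax2
      have hx0 : max (u x - v x) 0 = 0 := max_eq_right hxw.le
      filter_upwards [hmax2] with y hy
      have h1 : (0:ℝ) ≤ max (u y - v y) 0 := le_max_right _ _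
      rw [hx0] at hy
      linarith
    -- trace of the Hessian is nonnegative
    have htr : 0 ≤ (hessMat φ x).trace := by
      rw [Matrix.trace]
      apply Finset.sum_nonneg
      intro i _
      exact secondDeriv_nonneg_of_isLocalMin hφ hmin (EuclideanSpace.single i 1)
    -- pucciSup is nonnegative
    have hP : 0 ≤ pucciSup lam Lam (hessMat φ x) := by
      rw [pucciSup]
      by_cases hbdd : BddAbove { t | ∃ A : Matrix (Fin N) (Fin N) ℝ, A.IsHermitian ∧
          (A - lam • 1).PosSemidef ∧ (Lam • 1 - A).PosSemidef ∧
          t = (A * hessMat φ x).trace }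
      · have hmem : lam * (hessMat φ x).trace ∈ { t | ∃ A : Matrix (Fin N) (Fin N) ℝ,
            A.IsHermitian ∧ (A - lam • 1).PosSemidef ∧ (Lam • 1 - A).PosSemidef ∧
            t = (A * hessMat φ x).trace } := by
          refine ⟨lam • 1, ?_, ?_, ?_, ?_⟩
          · simp [Matrix.IsHermitian, Matrix.conjTranspose_smul]
          · simpa [sub_self] using (Matrix.PosSemidef.zero (n := Fin N) (R := ℝ))
          · have : Lam • (1 : Matrix (Fin N) (Fin N) ℝ) - lam • 1 = (Lam - lam) • 1 := by
              rw [sub_smul]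
            rw [this, Matrix.smul_one_eq_diagonal]
            exact Matrix.posSemidef_diagonal_iff.mpr fun i => by simp; linarith
          · rw [Matrix.smul_mul, Matrix.one_mul, Matrix.trace_smul, smul_eq_mul]
        exact le_trans (mul_nonneg hlam.le htr) (le_csSup hbdd hmem)
      · rw [Real.sSup_of_not_bddAbove hbdd]
    show -pucciSup lam Lam (hessMat φ x) + max (G x) 0 ≤ max (f x) 0
    rw [hGx]
    have : (0:ℝ) ≤ max (f x) 0 := le_max_right _ _
    linarith
end
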